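/- The number of matrices A ∈ GL(2, F_p) (p an odd prime) that are not the square of any matrix in GL(2, F_p) equals (5/8)p⁴ + O(p³). -/

import Mathlib

open Finset Matrix Polynomial

namespace Stmt8Aux


variable {K : Type*} [Field K]

/-- Cayley–Hamilton for 2×2 matrices, by direct computation. -/
lemma ch2 (B : Matrix (Fin 2) (Fin 2) K) :
    B * B = B.trace • B - B.det • (1 : Matrix (Fin 2) (Fin 2) K) := by
  ext i j
  simp only [Matrix.mul_apply, Matrix.trace_fin_two, Matrix.det_fin_two,
    Matrix.sub_apply, Matrix.smul_apply, Matrix.one_apply, smul_eq_mul,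
    Fin.sum_univ_two]
  fin_cases i <;> fin_cases j <;> simp <;> ring

/-- The square-root criterion for nonscalar matrices. -/
lemma sq_iff (A : Matrix (Fin 2) (Fin 2) K) (hA : IsUnit A)
    (hns : ∀ c : K, A ≠ c • (1 : Matrix (Fin 2) (Fin 2) K)) :
    (∃ B : Matrix (Fin 2) (Fin 2) K, IsUnit B ∧ B * B = A) ↔
      ∃ e s : K, e * e = A.det ∧ s ≠ 0 ∧ s * s = A.trace + 2 * e := by
  constructor
  · rintro ⟨B, -, rfl⟩
    refine ⟨B.det, B.trace, ?_, ?_, ?_⟩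
    · rw [Matrix.det_mul]
    · intro h0
      apply hns (-B.det)
      rw [ch2, h0, zero_smul, zero_sub, neg_smul]
    · rw [ch2, Matrix.trace_sub, Matrix.trace_smul, Matrix.trace_smul,
        Matrix.trace_one]
      simp only [smul_eq_mul, Matrix.trace_one, Fintype.card_fin, Nat.cast_ofNat]
      ring
  · rintro ⟨e, s, he, hs0, hs⟩
    set M : Matrix (Fin 2) (Fin 2) K := A + e • (1 : Matrix (Fin 2) (Fin 2) K) with hM
    have hdet : e * e = A 0 0 * A 1 1 - A 0 1 * A 1 0 := by
      rw [he, Matrix.det_fin_two]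
    have htr : s * s = A 0 0 + A 1 1 + 2 * e := by
      rw [hs, Matrix.trace_fin_two]
    have key : M * M = (s * s) • A := by
      ext i j
      fin_cases i <;> fin_cases j <;>
        simp [hM, Matrix.mul_apply, Fin.sum_univ_two, Matrix.add_apply,
          Matrix.smul_apply, Matrix.one_apply, smul_eq_mul]
      · linear_combination hdet - A 0 0 * htr
      · linear_combination (- A 0 1) * htr
      · linear_combination (- A 1 0) * htr
      · linear_combination hdet - A 1 1 * htr
    refine ⟨s⁻¹ • M, ?_, ?_⟩
    · -- a unit since its square is the unit A
      have hsq : (s⁻¹ • M) * (s⁻¹ • M) = A := by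
        rw [Matrix.smul_mul, Matrix.mul_smul, smul_smul, key, smul_smul]
        have : s⁻¹ * s⁻¹ * (s * s) = 1 := by field_simp
        rw [this, one_smul]
      rw [Matrix.isUnit_iff_isUnit_det]
      have : IsUnit ((s⁻¹ • M).det * (s⁻¹ • M).det) := by
        rw [← Matrix.det_mul, hsq, ← Matrix.isUnit_iff_isUnit_det]
        exact hA
      exact isUnit_of_mul_isUnit_left this
    · rw [Matrix.smul_mul, Matrix.mul_smul, smul_smul, key, smul_smul]
      have : s⁻¹ * s⁻¹ * (s * s) = 1 := by field_simp
      rw [this, one_smul]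



variable (p : ℕ) [Fact p.Prime]

/-- pairs (b,c) with b*c = m -/
def pairF (m : ZMod p) : Finset (ZMod p × ZMod p) :=
  univ.filter (fun x => x.1 * x.2 = m)

lemma pair_card_ne {m : ZMod p} (hm : m ≠ 0) : (pairF p m).card = p - 1 := by
  have : (pairF p m).card = ((univ : Finset (ZMod p)).erase 0).card := by
    apply Finset.card_nbij' (fun x => x.1) (fun b => (b, b⁻¹ * m))
    · intro x hx
      simp only [Finset.mem_coe, pairF, mem_filter, mem_univ, true_and] at hx
      simp only [Finset.mem_coe, mem_erase, mem_univ, and_true]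
      intro h0
      exact hm (by rw [← hx, h0, zero_mul])
    · intro b hb
      simp only [Finset.mem_coe, mem_erase, mem_univ, and_true] at hb
      simp only [Finset.mem_coe, pairF, mem_filter, mem_univ, true_and]
      field_simp
    · intro x hx
      simp only [Finset.mem_coe, pairF, mem_filter, mem_univ, true_and] at hx
      have hx1 : x.1 ≠ 0 := by
        rintro h0
        exact hm (by rw [← hx, h0, zero_mul])
      have : x.1⁻¹ * m = x.2 := by field_simp [← hx]; exact hx.symm
      exact Prod.ext rfl this
    · intro b hb; rfl
  rw [this, Finset.card_erase_of_mem (mem_univ 0), Finset.card_univ, ZMod.card]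

lemma pair_card_zero_le : (pairF p 0).card ≤ 2 * p := by
  have hsub : pairF p 0 ⊆
      (univ.image fun c : ZMod p => ((0 : ZMod p), c)) ∪
        (univ.image fun b : ZMod p => (b, (0 : ZMod p))) := by
    intro x hx
    simp only [pairF, mem_filter, mem_univ, true_and] at hx
    rcases mul_eq_zero.mp hx with h | h
    · exact Finset.mem_union_left _ (Finset.mem_image.mpr ⟨x.2, mem_univ _,
        Prod.ext h.symm rfl⟩)
    · exact Finset.mem_union_right _ (Finset.mem_image.mpr ⟨x.1, mem_univ _,
        Prod.ext rfl h.symm⟩)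
  calc (pairF p 0).card ≤ _ := Finset.card_le_card hsub
    _ ≤ (univ.image fun c : ZMod p => ((0 : ZMod p), c)).card +
        (univ.image fun b : ZMod p => (b, (0 : ZMod p))).card := Finset.card_union_le _ _
    _ ≤ p + p := by
        gcongr <;> calc _ ≤ (univ : Finset (ZMod p)).card := Finset.card_image_le
          _ = p := by rw [Finset.card_univ, ZMod.card]
    _ = 2 * p := by ring

lemma pair_card_zero_ge : p ≤ (pairF p 0).card := by
  have : ((univ : Finset (ZMod p)).image fun c : ZMod p => ((0 : ZMod p), c)) ⊆ pairF p 0 := by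
    intro x hx
    simp only [mem_image, mem_univ, true_and] at hx
    obtain ⟨c, rfl⟩ := hx
    simp [pairF]
  calc p = ((univ : Finset (ZMod p)).image fun c : ZMod p => ((0 : ZMod p), c)).card := by
        rw [Finset.card_image_of_injective _ (fun a b h => (Prod.ext_iff.mp h).2),
          Finset.card_univ, ZMod.card]
    _ ≤ _ := Finset.card_le_card this

/-- roots of the quadratic a(t-a) - Δ = 0 -/
def rootsF (t d : ZMod p) : Finset (ZMod p) :=
  univ.filter (fun a => a * (t - a) - d = 0)

lemma roots_card_le (t d : ZMod p) : (rootsF p t d).card ≤ 2 := by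
  set q : Polynomial (ZMod p) := C 1 * X ^ 2 + C (-t) * X + C d with hq
  have hdeg : q.natDegree = 2 := Polynomial.natDegree_quadratic one_ne_zero
  have hq0 : q ≠ 0 := by
    intro h
    rw [h, Polynomial.natDegree_zero] at hdeg
    exact two_ne_zero hdeg.symm
  have hsub : rootsF p t d ⊆ q.roots.toFinset := by
    intro a ha
    simp only [rootsF, mem_filter, mem_univ, true_and] at ha
    rw [Multiset.mem_toFinset, Polynomial.mem_roots hq0]
    simp only [Polynomial.IsRoot, hq, Polynomial.eval_add, Polynomial.eval_mul,
      Polynomial.eval_pow, Polynomial.eval_C, Polynomial.eval_X]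
    linear_combination -ha
  calc (rootsF p t d).card ≤ q.roots.toFinset.card := Finset.card_le_card hsub
    _ ≤ Multiset.card q.roots := Multiset.toFinset_card_le _
    _ ≤ q.natDegree := Polynomial.card_roots' q
    _ = 2 := hdeg

/-- matrices with given trace and determinant -/
def fibF (t d : ZMod p) : Finset (Matrix (Fin 2) (Fin 2) (ZMod p)) :=
  univ.filter (fun A => A.trace = t ∧ A.det = d)

lemma fib_card_eq (t d : ZMod p) :
    (fibF p t d).card = ∑ a : ZMod p, (pairF p (a * (t - a) - d)).card := by
  have h1 : (fibF p t d).card =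
      (univ.filter (fun x : ZMod p × ZMod p × ZMod p =>
        x.2.1 * x.2.2 = x.1 * (t - x.1) - d)).card := by
    apply Finset.card_nbij' (fun A => (A 0 0, A 0 1, A 1 0))
      (fun x => !![x.1, x.2.1; x.2.2, t - x.1])
    · intro A hA
      simp only [Finset.mem_coe, fibF, mem_filter, mem_univ, true_and, Matrix.trace_fin_two,
        Matrix.det_fin_two] at hA
      simp only [Finset.mem_coe, mem_filter, mem_univ, true_and]
      obtain ⟨htr, hdet⟩ := hA
      linear_combination -hdet + A 0 0 * htr
    · intro x hx
      simp only [Finset.mem_coe, mem_filter, mem_univ, true_and] at hx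
      simp only [Finset.mem_coe, fibF, mem_filter, mem_univ, true_and, Matrix.trace_fin_two,
        Matrix.det_fin_two]
      constructor
      · simp
      · simp
        linear_combination -hx
    · intro A hA
      simp only [Finset.mem_coe, fibF, mem_filter, mem_univ, true_and, Matrix.trace_fin_two,
        Matrix.det_fin_two] at hA
      ext i j
      fin_cases i <;> fin_cases j <;> simp
      linear_combination -hA.1
    · intro x hx
      simp
  rw [h1, Finset.card_filter, Fintype.sum_prod_type]
  congr 1
  ext a
  rw [pairF, Finset.card_filter]

lemma fib_bound (t d : ZMod p) :
    |((fibF p t d).card : ℝ) - (p : ℝ) ^ 2| ≤ 3 * p := by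
  have hp1 : 1 ≤ p := (Fact.out : p.Prime).one_lt.le
  have hp1R : (1 : ℝ) ≤ p := by exact_mod_cast hp1
  have hcast : ((p - 1 : ℕ) : ℝ) = (p : ℝ) - 1 := by
    rw [Nat.cast_sub hp1]; norm_num
  have low : ∀ a : ZMod p, (p : ℝ) - 1 ≤ ((pairF p (a * (t - a) - d)).card : ℝ) := by
    intro a
    by_cases h : a * (t - a) - d = 0
    · rw [h]
      have := pair_card_zero_ge p
      have : (p : ℝ) ≤ (pairF p 0).card := by exact_mod_cast this
      linarith
    · rw [pair_card_ne p h, hcast]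
  have high : ∀ a : ZMod p, ((pairF p (a * (t - a) - d)).card : ℝ) ≤
      ((p : ℝ) - 1) + (if a ∈ rootsF p t d then (p : ℝ) + 1 else 0) := by
    intro a
    by_cases h : a * (t - a) - d = 0
    · have hmem : a ∈ rootsF p t d := by simp [rootsF, h]
      rw [h, if_pos hmem]
      have := pair_card_zero_le p
      have : ((pairF p 0).card : ℝ) ≤ 2 * p := by exact_mod_cast this
      linarith
    · have hmem : a ∉ rootsF p t d := by simp [rootsF, h]
      rw [pair_card_ne p h, hcast, if_neg hmem]
      linarith
  have hsum : ((fibF p t d).card : ℝ) = ∑ a : ZMod p, ((pairF p (a * (t - a) - d)).card : ℝ) := by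
    rw [fib_card_eq]; push_cast; ring
  have hlow : (p : ℝ) * ((p : ℝ) - 1) ≤ ((fibF p t d).card : ℝ) := by
    rw [hsum]
    calc (p : ℝ) * ((p : ℝ) - 1) = ∑ _a : ZMod p, ((p : ℝ) - 1) := by
          rw [Finset.sum_const, Finset.card_univ, ZMod.card, nsmul_eq_mul]
      _ ≤ _ := Finset.sum_le_sum fun a _ => low a
  have hhigh : ((fibF p t d).card : ℝ) ≤ (p : ℝ) * ((p : ℝ) - 1) + 2 * ((p : ℝ) + 1) := by
    rw [hsum]
    calc ∑ a : ZMod p, ((pairF p (a * (t - a) - d)).card : ℝ)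
        ≤ ∑ a : ZMod p, (((p : ℝ) - 1) + (if a ∈ rootsF p t d then (p : ℝ) + 1 else 0)) :=
          Finset.sum_le_sum fun a _ => high a
      _ = (p : ℝ) * ((p : ℝ) - 1) + ((rootsF p t d).card : ℝ) * ((p : ℝ) + 1) := by
          rw [Finset.sum_add_distrib, Finset.sum_const, Finset.card_univ, ZMod.card,
            nsmul_eq_mul, Finset.sum_ite_mem, Finset.univ_inter, Finset.sum_const,
            nsmul_eq_mul]
      _ ≤ (p : ℝ) * ((p : ℝ) - 1) + 2 * ((p : ℝ) + 1) := by
          have : ((rootsF p t d).card : ℝ) ≤ 2 := by exact_mod_cast roots_card_le p t d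
          nlinarith [this]
  rw [abs_le]
  constructor <;> nlinarith




lemma ringChar_ne_two (hodd : Odd p) : ringChar (ZMod p) ≠ 2 := by
  rw [ZMod.ringChar_zmod_n]
  intro h
  rw [h] at hodd
  exact (Nat.not_odd_iff_even.mpr (by norm_num)) hodd

local notation "χ" => quadraticChar (ZMod p)

lemma char_sum_shift (hodd : Odd p) (c : ZMod p) : ∑ u : ZMod p, χ (u - c) = 0 := by
  have h := Fintype.sum_equiv (Equiv.subRight c) (fun u : ZMod p => χ (u - c))
    (fun w : ZMod p => χ w) (fun u => rfl)
  rw [h]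
  exact quadraticChar_sum_zero (ringChar_ne_two p hodd)

lemma char_sum_mul (hodd : Odd p) {c : ZMod p} (hc : c ≠ 0) :
    ∑ u : ZMod p, χ u * χ (u - c) = -1 := by
  have h0 : χ (0 : ZMod p) * χ ((0 : ZMod p) - c) = 0 := by
    rw [quadraticChar_zero, zero_mul]
  rw [← Finset.sum_erase_add univ _ (mem_univ (0 : ZMod p)), h0, add_zero]
  have key : ∑ u ∈ univ.erase (0 : ZMod p), χ u * χ (u - c)
      = ∑ w ∈ univ.erase (1 : ZMod p), χ w := by
    apply Finset.sum_nbij' (fun u => 1 - c * u⁻¹) (fun w => c * (1 - w)⁻¹)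
    · intro u hu
      simp only [mem_erase, mem_univ, and_true] at hu ⊢
      intro h
      have : c * u⁻¹ = 0 := by linear_combination -h
      rcases mul_eq_zero.mp this with h' | h'
      · exact hc h'
      · exact hu (by simpa using inv_eq_zero.mp h')
    · intro w hw
      simp only [mem_erase, mem_univ, and_true] at hw ⊢
      have h1 : (1 : ZMod p) - w ≠ 0 := fun h => hw (by linear_combination -h)
      exact mul_ne_zero hc (inv_ne_zero h1)
    · intro u hu
      simp only [mem_erase, mem_univ, and_true] at hu
      have hcu : c * u⁻¹ ≠ 0 := mul_ne_zero hc (inv_ne_zero hu)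
      field_simp
      rw [sub_sub_cancel, div_self hc]
    · intro w hw
      simp only [mem_erase, mem_univ, and_true] at hw
      have h1 : (1 : ZMod p) - w ≠ 0 := fun h => hw (by linear_combination -h)
      field_simp
      ring
    · intro u hu
      simp only [mem_erase, mem_univ, and_true] at hu
      have h1 : u * (u - c) = u ^ 2 * (1 - c * u⁻¹) := by
        field_simp
      rw [← _root_.map_mul, h1, _root_.map_mul, quadraticChar_sq_one' hu, one_mul]
  rw [key]
  have h2 : (∑ w ∈ univ.erase (1 : ZMod p), χ w) + χ (1 : ZMod p) = ∑ w : ZMod p, χ w :=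
    Finset.sum_erase_add _ _ (mem_univ _)
  rw [quadraticChar_sum_zero (ringChar_ne_two p hodd)] at h2
  have h3 : χ (1 : ZMod p) = 1 := _root_.map_one _
  omega






def gF (c : ZMod p) : Finset (ZMod p) :=
  univ.filter (fun u => χ u ≠ 1 ∧ χ (u - c) ≠ 1)

lemma g_bound (hodd : Odd p) {c : ZMod p} (hc : c ≠ 0) :
    |4 * ((gF p c).card : ℤ) - p| ≤ 3 := by
  have point : ∀ u : ZMod p,
      (4 : ℤ) * (if χ u ≠ 1 ∧ χ (u - c) ≠ 1 then 1 else 0) =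
        (1 - χ u) * (1 - χ (u - c)) + ((if u = 0 then 1 - χ ((0 : ZMod p) - c) else 0)
          + (if u = c then 1 - χ c else 0)) := by
    intro u
    by_cases h0 : u = 0
    · subst h0
      have hne : ¬ ((0 : ZMod p) = c) := fun h => hc h.symm
      rw [if_neg hne, add_zero, if_pos rfl, quadraticChar_zero]
      have hnz : (0 : ZMod p) - c ≠ 0 := by simpa using hc
      rcases quadraticChar_dichotomy hnz with h | h <;> rw [h] <;> norm_num
    · by_cases h1 : u = c
      · subst h1
        rw [if_neg h0, if_pos rfl, sub_self, quadraticChar_zero]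
        rcases quadraticChar_dichotomy (fun h => h0 h) with h | h <;> rw [h] <;> norm_num
      · rw [if_neg h0, if_neg h1]
        have huc : u - c ≠ 0 := sub_ne_zero.mpr h1
        rcases quadraticChar_dichotomy h0 with h | h <;>
          rcases quadraticChar_dichotomy huc with h' | h' <;>
            rw [h, h'] <;> norm_num
  have hcard : (4 : ℤ) * ((gF p c).card : ℤ) =
      ∑ u : ZMod p, (4 : ℤ) * (if χ u ≠ 1 ∧ χ (u - c) ≠ 1 then 1 else 0) := by
    rw [← Finset.mul_sum]
    congr 1
    rw [gF, Finset.card_filter]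
    push_cast
    rfl
  rw [hcard, Finset.sum_congr rfl (fun u _ => point u)]
  rw [Finset.sum_add_distrib, Finset.sum_add_distrib,
    Finset.sum_ite_eq' univ (0 : ZMod p) (fun _ => 1 - χ ((0:ZMod p) - c)),
    Finset.sum_ite_eq' univ c (fun _ => 1 - χ c), if_pos (mem_univ _), if_pos (mem_univ _)]
  have expand : ∑ u : ZMod p, (1 - χ u) * (1 - χ (u - c)) = (p : ℤ) - 1 := by
    have h1 : ∀ u : ZMod p, (1 - χ u) * (1 - χ (u - c)) =
        1 - χ u - χ (u - c) + χ u * χ (u - c) := fun u => by ring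
    rw [Finset.sum_congr rfl (fun u _ => h1 u)]
    rw [Finset.sum_add_distrib, Finset.sum_sub_distrib, Finset.sum_sub_distrib,
      Finset.sum_const, Finset.card_univ, ZMod.card, quadraticChar_sum_zero
        (by rw [ZMod.ringChar_zmod_n]; rintro rfl; exact absurd hodd (by decide)),
      char_sum_shift p hodd c, char_sum_mul p hodd hc]
    push_cast
    ring
  rw [expand]
  have d1 : χ ((0 : ZMod p) - c) = 1 ∨ χ ((0 : ZMod p) - c) = -1 :=
    quadraticChar_dichotomy (by simpa using hc)
  have d2 : χ c = 1 ∨ χ c = -1 := quadraticChar_dichotomy hc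
  rw [abs_le]
  rcases d1 with h | h <;> rcases d2 with h' | h' <;> rw [h, h'] <;> constructor <;> linarith

-- also: residue counts
lemma res_count (hodd : Odd p) :
    2 * ((univ.filter (fun x : ZMod p => χ x = 1)).card : ℤ) + 1 = p ∧
    2 * ((univ.filter (fun x : ZMod p => χ x = -1)).card : ℤ) + 1 = p := by
  have hF : ringChar (ZMod p) ≠ 2 := by
    rw [ZMod.ringChar_zmod_n]; rintro rfl; exact absurd hodd (by decide)
  have hsum : ∑ x : ZMod p, χ x = 0 := quadraticChar_sum_zero hF
  -- split the sum over the three parts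
  set A := univ.filter (fun x : ZMod p => χ x = 1) with hA
  set B := univ.filter (fun x : ZMod p => χ x = -1) with hB
  have hpart : ∀ x : ZMod p, x ∈ A ∨ x ∈ B ∨ x = 0 := by
    intro x
    by_cases hx : x = 0
    · right; right; exact hx
    · rcases quadraticChar_dichotomy hx with h | h
      · left; rw [hA]; exact Finset.mem_filter.mpr ⟨mem_univ _, h⟩
      · right; left; rw [hB]; exact Finset.mem_filter.mpr ⟨mem_univ _, h⟩
  have hAB : Disjoint A B := by
    rw [Finset.disjoint_filter]
    intro x _ h1 h2
    rw [h1] at h2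
    norm_num at h2
  have hcardsum : A.card + B.card + 1 = p := by
    have hunion : A ∪ B ∪ {0} = univ := by
      ext x
      simp only [mem_union, mem_singleton, mem_univ, iff_true]
      rcases hpart x with h | h | h
      · left; left; exact h
      · left; right; exact h
      · right; exact h
    have h0A : (0 : ZMod p) ∉ A := by simp [hA, quadraticChar_zero]
    have h0B : (0 : ZMod p) ∉ B := by simp [hB, quadraticChar_zero]
    have hd2 : Disjoint (A ∪ B) {0} := by
      rw [Finset.disjoint_singleton_right]
      simp [h0A, h0B]
    have := Finset.card_union_of_disjoint hd2
    rw [hunion] at this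
    rw [Finset.card_union_of_disjoint hAB, Finset.card_singleton] at this
    rw [← this, Finset.card_univ, ZMod.card]
  have h0A : (0 : ZMod p) ∉ A := by simp [hA, quadraticChar_zero]
  have h0B : (0 : ZMod p) ∉ B := by simp [hB, quadraticChar_zero]
  have hd2 : Disjoint (A ∪ B) {0} := by
    rw [Finset.disjoint_singleton_right]
    simp [h0A, h0B]
  have hunion : A ∪ B ∪ {0} = univ := by
    ext x
    simp only [mem_union, mem_singleton, mem_univ, iff_true]
    rcases hpart x with h | h | h
    · left; left; exact h
    · left; right; exact h
    · right; exact h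
  have hsum2 : (A.card : ℤ) - B.card = 0 := by
    have e1 : ∑ x : ZMod p, χ x = ∑ x ∈ A ∪ B ∪ {0}, χ x := by rw [hunion]
    rw [Finset.sum_union hd2, Finset.sum_union hAB] at e1
    have eA : ∑ x ∈ A, χ x = (A.card : ℤ) := by
      rw [Finset.sum_congr rfl (fun x hx => (Finset.mem_filter.mp hx).2), Finset.sum_const,
        nsmul_eq_mul, mul_one]
    have eB : ∑ x ∈ B, χ x = -(B.card : ℤ) := by
      rw [Finset.sum_congr rfl (fun x hx => (Finset.mem_filter.mp hx).2), Finset.sum_const,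
        nsmul_eq_mul, mul_neg_one]
    have e0 : ∑ x ∈ ({0} : Finset (ZMod p)), χ x = 0 := by
      simp [quadraticChar_zero]
    rw [eA, eB, e0, hsum] at e1
    linarith
  have hcast : (A.card : ℤ) + B.card + 1 = p := by exact_mod_cast hcardsum
  constructor <;> linarith







def Qp (u : ZMod p) : Prop := ∃ s : ZMod p, s ≠ 0 ∧ s * s = u

instance : DecidablePred (Qp p) := fun u => by unfold Qp; infer_instance

def Pp (t d : ZMod p) : Prop := ¬ ∃ e : ZMod p, e * e = d ∧ Qp p (t + 2 * e)

instance : ∀ t d : ZMod p, Decidable (Pp p t d) := fun t d => by unfold Pp; infer_instance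

def badF : Finset (ZMod p × ZMod p) :=
  univ.filter (fun x => x.2 ≠ 0 ∧ Pp p x.1 x.2)

lemma two_ne_zero' (hodd : Odd p) : (2 : ZMod p) ≠ 0 := by
  intro h
  have h2 : ((2 : ℕ) : ZMod p) = 0 := by exact_mod_cast h
  rw [ZMod.natCast_eq_zero_iff] at h2
  have hp : p.Prime := Fact.out
  have : p = 2 := (Nat.prime_dvd_prime_iff_eq hp Nat.prime_two).mp h2
  rw [this] at hodd
  exact absurd hodd (by decide)

lemma notQ_iff (u : ZMod p) : ¬ Qp p u ↔ χ u ≠ 1 := by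
  by_cases hu : u = 0
  · subst hu
    constructor
    · intro _
      rw [quadraticChar_zero]
      norm_num
    · intro _ h
      obtain ⟨s, hs, hss⟩ := h
      exact hs (mul_self_eq_zero.mp hss)
  · have hiff : Qp p u ↔ χ u = 1 := by
      rw [quadraticChar_one_iff_isSquare hu]
      constructor
      · rintro ⟨s, -, rfl⟩
        exact ⟨s, rfl⟩
      · rintro ⟨r, rfl⟩
        exact ⟨r, fun h => hu (by rw [h, mul_zero]), rfl⟩
    exact not_congr hiff

lemma fcount_nonres (hodd : Odd p) {d : ZMod p} (hd : χ d = -1) :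
    (univ.filter (fun t : ZMod p => d ≠ 0 ∧ Pp p t d)).card = p := by
  have hd0 : d ≠ 0 := by
    intro h; rw [h, quadraticChar_zero] at hd; norm_num at hd
  have : ∀ t : ZMod p, d ≠ 0 ∧ Pp p t d := by
    intro t
    refine ⟨hd0, ?_⟩
    rintro ⟨e, hee, -⟩
    have he0 : e ≠ 0 := fun h => hd0 (by rw [← hee, h, mul_zero])
    have : χ d = 1 := by
      rw [← hee]
      rw [quadraticChar_one_iff_isSquare (mul_ne_zero he0 he0)]
      exact ⟨e, mul_comm e e ▸ rfl⟩
    rw [this] at hd; norm_num at hd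
  rw [Finset.filter_true_of_mem (fun t _ => this t), Finset.card_univ, ZMod.card]

lemma fcount_res (hodd : Odd p) {d : ZMod p} (hd : χ d = 1) :
    ∃ c : ZMod p, c ≠ 0 ∧
      (univ.filter (fun t : ZMod p => d ≠ 0 ∧ Pp p t d)).card = (gF p c).card := by
  have hd0 : d ≠ 0 := by
    intro h; rw [h, quadraticChar_zero] at hd; norm_num at hd
  obtain ⟨y, hy⟩ := (quadraticChar_one_iff_isSquare hd0).mp hd
  have hyy : d = y * y := hy
  have hy0 : y ≠ 0 := fun h => hd0 (by rw [hyy, h, mul_zero])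
  have h2 : (2 : ZMod p) ≠ 0 := two_ne_zero' p hodd
  refine ⟨4 * y, by
    have : (4 : ZMod p) = 2 * 2 := by norm_num
    exact mul_ne_zero (this ▸ mul_ne_zero h2 h2) hy0, ?_⟩
  have hPp : ∀ t : ZMod p, Pp p t d ↔ (¬ Qp p (t + 2*y) ∧ ¬ Qp p (t - 2*y)) := by
    intro t
    constructor
    · intro hP
      constructor
      · intro hQ; exact hP ⟨y, hyy.symm, hQ⟩
      · intro hQ
        refine hP ⟨-y, by linear_combination -hyy, ?_⟩
        rw [show t + 2 * -y = t - 2*y from by ring]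
        exact hQ
    · rintro ⟨h1, h2'⟩ ⟨e, hee, hQ⟩
      have : (e - y) * (e + y) = 0 := by linear_combination hee + hyy
      rcases mul_eq_zero.mp this with h | h
      · have : e = y := by linear_combination h
        rw [this] at hQ
        exact h1 hQ
      · have : e = -y := by linear_combination h
        rw [this] at hQ
        rw [show t + 2 * -y = t - 2*y from by ring] at hQ
        exact h2' hQ
  apply Finset.card_nbij' (fun t => t + 2*y) (fun u => u - 2*y)
  · intro t ht
    simp only [Finset.mem_coe, mem_filter, mem_univ, true_and] at ht
    obtain ⟨-, hP⟩ := ht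
    obtain ⟨hq1, hq2⟩ := (hPp t).mp hP
    simp only [Finset.mem_coe, gF, mem_filter, mem_univ, true_and]
    constructor
    · exact (notQ_iff p _).mp hq1
    · have : t + 2*y - 4*y = t - 2*y := by ring
      rw [this]
      exact (notQ_iff p _).mp hq2
  · intro u hu
    simp only [Finset.mem_coe, gF, mem_filter, mem_univ, true_and] at hu
    obtain ⟨hq1, hq2⟩ := hu
    simp only [Finset.mem_coe, mem_filter, mem_univ, true_and]
    refine ⟨hd0, (hPp _).mpr ⟨?_, ?_⟩⟩
    · rw [show u - 2*y + 2*y = u from by ring]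
      exact (notQ_iff p u).mpr hq1
    · rw [show u - 2*y - 2*y = u - 4*y from by ring]
      exact (notQ_iff p _).mpr hq2
  · intro t _; ring
  · intro u _; ring

lemma bad_fiber : ((badF p).card : ℤ) =
    ∑ d : ZMod p, ((univ.filter (fun t : ZMod p => d ≠ 0 ∧ Pp p t d)).card : ℤ) := by
  have h1 : (badF p).card =
      ∑ d : ZMod p, ((badF p).filter (fun x => x.2 = d)).card :=
    Finset.card_eq_sum_card_fiberwise (fun x _ => mem_univ x.2)
  rw [h1]
  push_cast
  apply Finset.sum_congr rfl
  intro d _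
  congr 1
  apply Finset.card_nbij' (fun x => x.1) (fun t => (t, d))
  · intro x hx
    simp only [Finset.mem_coe, badF, mem_filter, mem_univ, true_and] at hx
    obtain ⟨⟨h1', h2'⟩, h3'⟩ := hx
    subst h3'
    simp only [Finset.mem_coe, mem_filter, mem_univ, true_and]
    exact ⟨h1', h2'⟩
  · intro t ht
    simp only [Finset.mem_coe, mem_filter, mem_univ, true_and] at ht
    simp only [Finset.mem_coe, badF, mem_filter, mem_univ, true_and]
    exact ⟨⟨ht.1, ht.2⟩, by simp⟩
  · intro x hx
    simp only [Finset.mem_coe, badF, mem_filter, mem_univ, true_and] at hx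
    exact Prod.ext rfl hx.2.symm
  · intro t _; rfl

lemma bad_bound (hodd : Odd p) :
    |8 * ((badF p).card : ℤ) - 5 * (p:ℤ)^2| ≤ 11 * (p:ℤ) := by
  obtain ⟨hres1, hres2⟩ := res_count p hodd
  set T : ZMod p → ℤ := fun d => if d = 0 then 0 else (if χ d = 1 then 2*p else 8*p) with hT
  have hpt : ∀ d : ZMod p,
      |8 * ((univ.filter (fun t : ZMod p => d ≠ 0 ∧ Pp p t d)).card : ℤ) - T d| ≤ 6 := by
    intro d
    by_cases h0 : d = 0
    · subst h0
      have : (univ.filter (fun t : ZMod p => (0:ZMod p) ≠ 0 ∧ Pp p t 0)) = ∅ := by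
        apply Finset.filter_false_of_mem
        intro t _
        rintro ⟨h, -⟩
        exact h rfl
      rw [this, hT]
      simp
    · by_cases h1 : χ d = 1
      · obtain ⟨c, hc, hcard⟩ := fcount_res p hodd h1
        rw [hcard, hT]
        simp only [if_neg h0, if_pos h1]
        have := g_bound p hodd hc
        have he : (8:ℤ) * ((gF p c).card : ℤ) - 2 * (p:ℤ) =
            2 * (4 * ((gF p c).card : ℤ) - (p:ℤ)) := by ring
        rw [he, abs_mul, abs_two]
        linarith [this]
      · have h2 : χ d = -1 := (quadraticChar_dichotomy h0).resolve_left h1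
        rw [fcount_nonres p hodd h2, hT]
        simp only [if_neg h0, if_neg h1]
        simp
  set A := univ.filter (fun x : ZMod p => χ x = 1) with hA
  set B := univ.filter (fun x : ZMod p => χ x = -1) with hB
  have h0A : (0 : ZMod p) ∉ A := by simp [hA, quadraticChar_zero]
  have h0B : (0 : ZMod p) ∉ B := by simp [hB, quadraticChar_zero]
  have hAB : Disjoint A B := by
    rw [Finset.disjoint_filter]
    intro x _ h1 h2
    rw [h1] at h2
    norm_num at h2
  have hd2 : Disjoint (A ∪ B) {0} := by
    rw [Finset.disjoint_singleton_right]
    simp [h0A, h0B]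
  have hunion : A ∪ B ∪ {0} = univ := by
    ext x
    simp only [mem_union, mem_singleton, mem_univ, iff_true]
    by_cases hx : x = 0
    · right; exact hx
    · rcases quadraticChar_dichotomy hx with h | h
      · left; left; rw [hA]; exact Finset.mem_filter.mpr ⟨mem_univ _, h⟩
      · left; right; rw [hB]; exact Finset.mem_filter.mpr ⟨mem_univ _, h⟩
  have hsumT : ∑ d : ZMod p, T d = 5 * (p:ℤ)^2 - 5 * p := by
    have e1 : ∑ d : ZMod p, T d = ∑ d ∈ A ∪ B ∪ {0}, T d := by rw [hunion]
    rw [Finset.sum_union hd2, Finset.sum_union hAB] at e1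
    have eA : ∑ d ∈ A, T d = 2 * (p:ℤ) * A.card := by
      have hv : ∀ x ∈ A, T x = 2 * (p:ℤ) := by
        intro x hx
        have hx1 : χ x = 1 := (Finset.mem_filter.mp hx).2
        have hx0 : x ≠ 0 := by
          intro h; rw [h, quadraticChar_zero] at hx1; norm_num at hx1
        rw [hT]
        simp only [if_neg hx0, if_pos hx1]
      rw [Finset.sum_congr rfl hv, Finset.sum_const, nsmul_eq_mul]
      ring
    have eB : ∑ d ∈ B, T d = 8 * (p:ℤ) * B.card := by
      have hv : ∀ x ∈ B, T x = 8 * (p:ℤ) := by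
        intro x hx
        have hx1 : χ x = -1 := (Finset.mem_filter.mp hx).2
        have hx0 : x ≠ 0 := by
          intro h; rw [h, quadraticChar_zero] at hx1; norm_num at hx1
        have hxne : ¬ (χ x = 1) := by rw [hx1]; norm_num
        rw [hT]
        simp only [if_neg hx0, if_neg hxne]
      rw [Finset.sum_congr rfl hv, Finset.sum_const, nsmul_eq_mul]
      ring
    have e0 : ∑ d ∈ ({0} : Finset (ZMod p)), T d = 0 := by
      rw [Finset.sum_singleton, hT]
      simp
    rw [eA, eB, e0, add_zero] at e1
    rw [e1]
    nlinarith [hres1, hres2]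
  have h1 : 8 * ((badF p).card : ℤ) =
      ∑ d : ZMod p, 8 * ((univ.filter (fun t : ZMod p => d ≠ 0 ∧ Pp p t d)).card : ℤ) := by
    rw [bad_fiber, Finset.mul_sum]
  have h2 : ∑ d : ZMod p,
      (8 * ((univ.filter (fun t : ZMod p => d ≠ 0 ∧ Pp p t d)).card : ℤ) - T d)
      = 8 * ((badF p).card : ℤ) - ∑ d : ZMod p, T d := by
    rw [Finset.sum_sub_distrib, ← h1]
  have h3 : |∑ d : ZMod p,
      (8 * ((univ.filter (fun t : ZMod p => d ≠ 0 ∧ Pp p t d)).card : ℤ) - T d)| ≤ 6 * p := by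
    calc _ ≤ ∑ d : ZMod p,
        |8 * ((univ.filter (fun t : ZMod p => d ≠ 0 ∧ Pp p t d)).card : ℤ) - T d| :=
          Finset.abs_sum_le_sum_abs _ _
      _ ≤ ∑ _d : ZMod p, (6:ℤ) := Finset.sum_le_sum (fun d _ => hpt d)
      _ = 6 * p := by rw [Finset.sum_const, Finset.card_univ, ZMod.card, nsmul_eq_mul]; ring
  rw [h2, hsumT] at h3
  rw [abs_le] at h3 ⊢
  constructor <;> linarith

def tF : Finset (Matrix (Fin 2) (Fin 2) (ZMod p)) :=
  univ.filter (fun A => A.det ≠ 0 ∧ Pp p A.trace A.det)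

lemma t_fiber : (tF p).card = ∑ x ∈ badF p, (fibF p x.1 x.2).card := by
  have h1 : (tF p).card = ∑ x ∈ badF p, ((tF p).filter
      (fun A => (A.trace, A.det) = x)).card := by
    apply Finset.card_eq_sum_card_fiberwise
    intro A hA
    simp only [Finset.mem_coe, tF, mem_filter, mem_univ, true_and] at hA
    simp only [Finset.mem_coe, badF, mem_filter, mem_univ, true_and]
    exact hA
  rw [h1]
  apply Finset.sum_congr rfl
  intro x hx
  simp only [badF, mem_filter, mem_univ, true_and] at hx
  congr 1
  ext A
  simp only [tF, fibF, mem_filter, mem_univ, true_and, Prod.ext_iff]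
  constructor
  · rintro ⟨-, h1', h2'⟩
    exact ⟨h1', h2'⟩
  · rintro ⟨h1', h2'⟩
    exact ⟨⟨h2' ▸ hx.1, by rw [h1', h2']; exact hx.2⟩, h1', h2'⟩

lemma t_bound (hodd : Odd p) :
    |((tF p).card : ℝ) - (5/8) * (p:ℝ)^4| ≤ 5 * (p:ℝ)^3 := by
  have hp1 : (1:ℝ) ≤ (p:ℝ) := by
    exact_mod_cast (Fact.out : p.Prime).one_lt.le
  have hbadcard : ((badF p).card : ℝ) ≤ (p:ℝ)^2 := by
    have : (badF p).card ≤ p^2 := by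
      calc (badF p).card ≤ (univ : Finset (ZMod p × ZMod p)).card := Finset.card_le_univ _
        _ = p^2 := by
          rw [Finset.card_univ, Fintype.card_prod, ZMod.card]; ring
    exact_mod_cast this
  have h1 : |((tF p).card : ℝ) - (p:ℝ)^2 * (badF p).card| ≤ 3 * (p:ℝ)^3 := by
    have : ((tF p).card : ℝ) - (p:ℝ)^2 * (badF p).card =
        ∑ x ∈ badF p, (((fibF p x.1 x.2).card : ℝ) - (p:ℝ)^2) := by
      rw [Finset.sum_sub_distrib, Finset.sum_const, nsmul_eq_mul]
      rw [t_fiber]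
      push_cast
      ring
    rw [this]
    calc |∑ x ∈ badF p, (((fibF p x.1 x.2).card : ℝ) - (p:ℝ)^2)|
        ≤ ∑ x ∈ badF p, |((fibF p x.1 x.2).card : ℝ) - (p:ℝ)^2| :=
          Finset.abs_sum_le_sum_abs _ _
      _ ≤ ∑ _x ∈ badF p, 3 * (p:ℝ) := Finset.sum_le_sum (fun x _ => fib_bound p x.1 x.2)
      _ = ((badF p).card : ℝ) * (3 * p) := by rw [Finset.sum_const, nsmul_eq_mul]
      _ ≤ (p:ℝ)^2 * (3*p) := by
          apply mul_le_mul_of_nonneg_right hbadcard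
          positivity
      _ = 3 * (p:ℝ)^3 := by ring
  have h2 : |(p:ℝ)^2 * ((badF p).card : ℝ) - (5/8) * (p:ℝ)^4| ≤ (11/8) * (p:ℝ)^3 := by
    have hb := bad_bound p hodd
    have hbR : |8 * ((badF p).card : ℝ) - 5 * (p:ℝ)^2| ≤ 11 * (p:ℝ) := by
      have h := abs_le.mp hb
      rw [abs_le]
      constructor
      · exact_mod_cast h.1
      · exact_mod_cast h.2
    have : (p:ℝ)^2 * ((badF p).card : ℝ) - (5/8) * (p:ℝ)^4 =
        ((p:ℝ)^2 / 8) * (8 * ((badF p).card : ℝ) - 5 * (p:ℝ)^2) := by ring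
    rw [this, abs_mul, abs_of_nonneg (by positivity : (0:ℝ) ≤ (p:ℝ)^2/8)]
    calc (p:ℝ)^2/8 * |8 * ((badF p).card : ℝ) - 5 * (p:ℝ)^2| ≤ (p:ℝ)^2/8 * (11 * p) := by
          apply mul_le_mul_of_nonneg_left hbR
          positivity
      _ = (11/8) * (p:ℝ)^3 := by ring
  calc |((tF p).card : ℝ) - (5/8) * (p:ℝ)^4|
      ≤ |((tF p).card : ℝ) - (p:ℝ)^2 * (badF p).card|
        + |(p:ℝ)^2 * ((badF p).card : ℝ) - (5/8) * (p:ℝ)^4| := by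
        exact abs_sub_le _ _ _
    _ ≤ 3 * (p:ℝ)^3 + (11/8) * (p:ℝ)^3 := by linarith [h1, h2]
    _ ≤ 5 * (p:ℝ)^3 := by nlinarith

theorem main_est (hodd : Odd p) :
    |(({A : Matrix (Fin 2) (Fin 2) (ZMod p) | IsUnit A ∧
          ¬ ∃ B : Matrix (Fin 2) (Fin 2) (ZMod p), IsUnit B ∧ B * B = A}.ncard : ℝ)
        - (5 / 8) * (p : ℝ) ^ 4)| ≤ 6 * (p : ℝ) ^ 3 := by
  classical
  have hp1 : (1:ℝ) ≤ (p:ℝ) := by exact_mod_cast (Fact.out : p.Prime).one_lt.le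
  set Sfin : Finset (Matrix (Fin 2) (Fin 2) (ZMod p)) :=
    univ.filter (fun A => IsUnit A ∧
      ¬ ∃ B : Matrix (Fin 2) (Fin 2) (ZMod p), IsUnit B ∧ B * B = A) with hSfin
  have hnc : ({A : Matrix (Fin 2) (Fin 2) (ZMod p) | IsUnit A ∧
      ¬ ∃ B : Matrix (Fin 2) (Fin 2) (ZMod p), IsUnit B ∧ B * B = A}.ncard : ℝ)
      = (Sfin.card : ℝ) := by
    congr 1
    rw [← Set.ncard_coe_finset]
    congr 1
    ext A
    simp [hSfin]
  -- scalar matrices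
  set Sc : Finset (Matrix (Fin 2) (Fin 2) (ZMod p)) :=
    univ.image (fun c : ZMod p => c • (1 : Matrix (Fin 2) (Fin 2) (ZMod p))) with hSc
  have hSccard : Sc.card ≤ p := by
    calc Sc.card ≤ (univ : Finset (ZMod p)).card := Finset.card_image_le
      _ = p := by rw [Finset.card_univ, ZMod.card]
  -- equivalence off scalars
  have hequiv : ∀ A : Matrix (Fin 2) (Fin 2) (ZMod p),
      (∀ c : ZMod p, A ≠ c • (1 : Matrix (Fin 2) (Fin 2) (ZMod p))) →
      (A ∈ Sfin ↔ A ∈ tF p) := by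
    intro A hns
    simp only [hSfin, tF, mem_filter, mem_univ, true_and]
    have hunit : IsUnit A ↔ A.det ≠ 0 := by
      rw [Matrix.isUnit_iff_isUnit_det, isUnit_iff_ne_zero]
    constructor
    · rintro ⟨hA, hnsq⟩
      refine ⟨hunit.mp hA, ?_⟩
      rintro ⟨e, hee, s, hs0, hss⟩
      exact hnsq ((sq_iff A hA hns).mpr ⟨e, s, hee, hs0, hss⟩)
    · rintro ⟨hd, hP⟩
      have hA : IsUnit A := hunit.mpr hd
      refine ⟨hA, ?_⟩
      intro hsq
      obtain ⟨e, s, hee, hs0, hss⟩ := (sq_iff A hA hns).mp hsq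
      exact hP ⟨e, hee, s, hs0, hss⟩
  have hsub1 : Sfin ⊆ tF p ∪ Sc := by
    intro A hA
    by_cases hns : ∀ c : ZMod p, A ≠ c • (1 : Matrix (Fin 2) (Fin 2) (ZMod p))
    · exact Finset.mem_union_left _ ((hequiv A hns).mp hA)
    · push_neg at hns
      obtain ⟨c, hc⟩ := hns
      exact Finset.mem_union_right _ (Finset.mem_image.mpr ⟨c, mem_univ _, hc.symm⟩)
  have hsub2 : tF p ⊆ Sfin ∪ Sc := by
    intro A hA
    by_cases hns : ∀ c : ZMod p, A ≠ c • (1 : Matrix (Fin 2) (Fin 2) (ZMod p))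
    · exact Finset.mem_union_left _ ((hequiv A hns).mpr hA)
    · push_neg at hns
      obtain ⟨c, hc⟩ := hns
      exact Finset.mem_union_right _ (Finset.mem_image.mpr ⟨c, mem_univ _, hc.symm⟩)
  have hc1 : Sfin.card ≤ (tF p).card + p := by
    calc Sfin.card ≤ (tF p ∪ Sc).card := Finset.card_le_card hsub1
      _ ≤ (tF p).card + Sc.card := Finset.card_union_le _ _
      _ ≤ (tF p).card + p := by omega
  have hc2 : (tF p).card ≤ Sfin.card + p := by
    calc (tF p).card ≤ (Sfin ∪ Sc).card := Finset.card_le_card hsub2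
      _ ≤ Sfin.card + Sc.card := Finset.card_union_le _ _
      _ ≤ Sfin.card + p := by omega
  have hdiff : |(Sfin.card : ℝ) - ((tF p).card : ℝ)| ≤ (p:ℝ) := by
    rw [abs_le]
    constructor
    · have : ((tF p).card : ℝ) ≤ (Sfin.card : ℝ) + p := by exact_mod_cast hc2
      linarith
    · have : (Sfin.card : ℝ) ≤ ((tF p).card : ℝ) + p := by exact_mod_cast hc1
      linarith
  rw [hnc]
  have ht := t_bound p hodd
  calc |(Sfin.card : ℝ) - (5/8) * (p:ℝ)^4|
      ≤ |(Sfin.card : ℝ) - ((tF p).card : ℝ)| + |((tF p).card : ℝ) - (5/8) * (p:ℝ)^4| :=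
        abs_sub_le _ _ _
    _ ≤ (p:ℝ) + 5 * (p:ℝ)^3 := by linarith
    _ ≤ 6 * (p:ℝ)^3 := by
        have hcube : (p:ℝ) ≤ (p:ℝ)^3 := by
          nlinarith [hp1, sq_nonneg ((p:ℝ) - 1), sq_nonneg ((p:ℝ) + 1)]
        linarith


end Stmt8Aux

theorem stmt_8 :
    ∃ C : ℝ, ∀ p : ℕ, p.Prime → Odd p →
      |(({A : Matrix (Fin 2) (Fin 2) (ZMod p) | IsUnit A ∧
            ¬ ∃ B : Matrix (Fin 2) (Fin 2) (ZMod p), IsUnit B ∧ B * B = A}.ncard : ℝ)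
          - (5 / 8) * (p : ℝ) ^ 4)| ≤ C * (p : ℝ) ^ 3 := by
  refine ⟨6, fun p hp hodd => ?_⟩
  haveI : Fact p.Prime := ⟨hp⟩
  exact Stmt8Aux.main_est p hodd
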